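/- Let n ∈ ℕ, c, ω > 0 and α > q > 0. For ξ > 0 and s ≥ 0 define h_{n,α,ω}(ξ,s) := ((ξ+c−ω)²+s)^{(n−1)/2} / ((ξ+c+ω)²+s)^{(n+α+1)/2}, and set H(n) := ∫₀^∞ φ_q(ξ) · sup_{s≥0} h_{n,α,ω}(ξ,s) dξ. Then sup_{n∈ℕ} H(n) < ∞, and as n → ∞: H(n) = O(n^{q−α−1}) if q < α < 2q; H(n) = O(n^{-(q+1)} log n) if α = 2q; and H(n) = O(n^{-(α/2+1)}) if α > 2q. -/

import Mathlib

open Filter Topology MeasureTheory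

noncomputable section

/-- The weight `φ_q(ξ) = 1` for `ξ < 1` and `ξ^q` for `ξ ≥ 1`. -/
def phiq (q ξ : ℝ) : ℝ := if ξ < 1 then 1 else ξ ^ q

/-- `h_{n,α,ω}(ξ,s) = ((ξ+c-ω)²+s)^{(n-1)/2} / ((ξ+c+ω)²+s)^{(n+α+1)/2}`. -/
def hfun (n : ℕ) (α c ω ξ s : ℝ) : ℝ :=
  ((ξ + c - ω) ^ 2 + s) ^ (((n : ℝ) - 1) / 2) / ((ξ + c + ω) ^ 2 + s) ^ (((n : ℝ) + α + 1) / 2)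

/-- `H(n) = ∫₀^∞ φ_q(ξ) sup_{s ≥ 0} h_{n,α,ω}(ξ,s) dξ` as an extended real number. -/
def Hint (α c ω q : ℝ) (n : ℕ) : ENNReal :=
  ∫⁻ ξ in Set.Ioi (0 : ℝ),
    ENNReal.ofReal (phiq q ξ * ⨆ s : Set.Ici (0 : ℝ), hfun n α c ω ξ s)

open Set

lemma phiq_nonneg (q ξ : ℝ) : 0 ≤ phiq q ξ := by
  unfold phiq; split
  · exact zero_le_one
  · exact Real.rpow_nonneg (le_trans zero_le_one (not_lt.1 (by assumption))) q

lemma phiq_of_one_le {q ξ : ℝ} (h : 1 ≤ ξ) : phiq q ξ = ξ ^ q := by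
  unfold phiq; rw [if_neg (not_lt.2 h)]

lemma phiq_le_one {q ξ : ℝ} (h : ξ ≤ 1) : phiq q ξ ≤ 1 := by
  unfold phiq; split
  · exact le_refl 1
  · have : ξ = 1 := le_antisymm h (not_lt.1 (by assumption))
    simp [this]

lemma rpow_mul_exp_neg_le {b x : ℝ} (hb : 0 < b) (hx : 0 < x) :
    x ^ b * Real.exp (-x) ≤ (b / Real.exp 1) ^ b := by
  rw [Real.rpow_def_of_pos hx, Real.rpow_def_of_pos (by positivity),
    Real.log_div hb.ne' (Real.exp_pos 1).ne', Real.log_exp, ← Real.exp_add]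
  apply Real.exp_le_exp.2
  have h := Real.log_le_sub_one_of_pos (div_pos hx hb)
  rw [Real.log_div hx.ne' hb.ne'] at h
  have h2 := mul_le_mul_of_nonneg_right h hb.le
  have h3 : (x / b - 1) * b = x - b := by field_simp
  nlinarith

lemma hfun_le_A {n : ℕ} {α c ω ξ s : ℝ} (hn : 1 ≤ n) (hα : 0 < α) (hc : 0 < c) (hω : 0 < ω)
    (hξ : 0 < ξ) (hs : 0 ≤ s) :
    hfun n α c ω ξ s ≤ (ξ + c + ω) ^ (-(α + 2)) := by
  have hx : 0 < ξ + c + ω := by linarith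
  have hB : 0 < (ξ + c + ω) ^ 2 + s := by positivity
  have hA : (0:ℝ) ≤ (ξ + c - ω) ^ 2 + s := by positivity
  have hAB : (ξ + c - ω) ^ 2 + s ≤ (ξ + c + ω) ^ 2 + s := by nlinarith
  have hn1 : (1:ℝ) ≤ (n:ℝ) := by exact_mod_cast hn
  have hm : 0 ≤ ((n:ℝ) - 1) / 2 := by linarith
  have hexp : ((n:ℝ) + α + 1) / 2 = ((n:ℝ) - 1) / 2 + (α + 2) / 2 := by ring
  have step1 : hfun n α c ω ξ s ≤ ((ξ + c + ω) ^ 2 + s) ^ (-((α + 2) / 2)) := by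
    rw [hfun, hexp, Real.rpow_add hB]
    rw [div_le_iff₀ (by positivity)]
    calc ((ξ + c - ω) ^ 2 + s) ^ (((n:ℝ) - 1) / 2)
        ≤ ((ξ + c + ω) ^ 2 + s) ^ (((n:ℝ) - 1) / 2) := Real.rpow_le_rpow hA hAB hm
      _ = ((ξ + c + ω) ^ 2 + s) ^ (-((α + 2) / 2)) *
          (((ξ + c + ω) ^ 2 + s) ^ (((n:ℝ) - 1) / 2) * ((ξ + c + ω) ^ 2 + s) ^ ((α + 2) / 2)) := by
          rw [← Real.rpow_add hB, ← Real.rpow_add hB]; ring_nf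
  refine step1.trans ?_
  have step2 : ((ξ + c + ω) ^ 2 + s) ^ (-((α + 2) / 2)) ≤ ((ξ + c + ω) ^ 2) ^ (-((α + 2) / 2)) :=
    Real.rpow_le_rpow_of_nonpos (by positivity) (by linarith) (by linarith)
  refine step2.trans_eq ?_
  rw [← Real.rpow_natCast (ξ + c + ω) 2, ← Real.rpow_mul hx.le]
  congr 1
  push_cast
  ring


lemma hfun_le_B {n : ℕ} {α c ω ξ s : ℝ} (hn : 2 ≤ n) (hα : 0 < α) (hc : 0 < c) (hω : 0 < ω)
    (hξ : 0 < ξ) (hs : 0 ≤ s) :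
    hfun n α c ω ξ s ≤ ((α + 2) / 2 / Real.exp 1) ^ ((α + 2) / 2) * ω ^ (-((α + 2) / 2)) *
      (n : ℝ) ^ (-((α + 2) / 2)) * (ξ + c) ^ (-((α + 2) / 2)) := by
  set β := (α + 2) / 2 with hβdef
  have hβ : 0 < β := by rw [hβdef]; linarith
  set m := ((n : ℝ) - 1) / 2 with hmdef
  have hn2 : (2:ℝ) ≤ (n:ℝ) := by exact_mod_cast hn
  have hm : 0 < m := by rw [hmdef]; linarith
  set D := 4 * ω * (ξ + c) with hDdef
  have hD : 0 < D := by positivity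
  set A := (ξ + c - ω) ^ 2 + s with hAdef
  set B := (ξ + c + ω) ^ 2 + s with hBdef
  have hB : 0 < B := by positivity
  have hA : 0 ≤ A := by positivity
  have hABD : A = B - D := by rw [hAdef, hBdef, hDdef]; ring
  have hDB : D ≤ B := by linarith
  have hmD : 0 < m * D := mul_pos hm hD
  set X := m * (D / B) with hXdef
  have hX : 0 < X := by positivity
  -- Step 1 : A ^ m ≤ B ^ m * exp (-X)
  have h1 : A = B * (1 - D / B) := by field_simp [hABD]; exact hABD
  have h2 : (0:ℝ) ≤ 1 - D / B := by
    have := (div_le_one hB).2 hDB; linarith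
  have h3 : 1 - D / B ≤ Real.exp (-(D / B)) := by
    have := Real.add_one_le_exp (-(D / B)); linarith
  have step1 : A ^ m ≤ B ^ m * Real.exp (-X) := by
    calc A ^ m = B ^ m * (1 - D / B) ^ m := by rw [h1, Real.mul_rpow hB.le h2]
      _ ≤ B ^ m * Real.exp (-(D / B)) ^ m :=
          mul_le_mul_of_nonneg_left (Real.rpow_le_rpow h2 h3 hm.le) (Real.rpow_nonneg hB.le m)
      _ = B ^ m * Real.exp (-X) := by
          rw [← Real.exp_mul]; congr 1; rw [hXdef]; ring
  -- Step 2 : hfun ≤ exp (-X) * B ^ (-β)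
  have hexp : ((n:ℝ) + α + 1) / 2 = m + β := by rw [hmdef, hβdef]; ring
  have step2 : hfun n α c ω ξ s ≤ Real.exp (-X) * B ^ (-β) := by
    rw [hfun, hexp]
    rw [← hAdef, ← hBdef, Real.rpow_add hB]
    calc A ^ m / (B ^ m * B ^ β) ≤ B ^ m * Real.exp (-X) / (B ^ m * B ^ β) := by
          apply div_le_div_of_nonneg_right step1 (by positivity)
      _ = Real.exp (-X) * B ^ (-β) := by
          rw [mul_div_mul_left _ _ (by positivity : (B:ℝ) ^ m ≠ 0), Real.rpow_neg hB.le,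
            div_eq_mul_inv]
  -- Step 3 : B ^ (-β) = X ^ β * (m * D) ^ (-β)
  have step3 : B ^ (-β) = X ^ β * (m * D) ^ (-β) := by
    rw [hXdef, ← mul_div_assoc, Real.div_rpow hmD.le hB.le, Real.rpow_neg hmD.le,
      Real.rpow_neg hB.le, div_mul_eq_mul_div, mul_inv_cancel₀ (by positivity : (m*D) ^ β ≠ 0),
      one_div]
  -- Step 4 : combine
  have step4 : hfun n α c ω ξ s ≤ (β / Real.exp 1) ^ β * (m * D) ^ (-β) := by
    refine step2.trans ?_
    rw [step3, ← mul_assoc]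
    refine mul_le_mul_of_nonneg_right ?_ (Real.rpow_nonneg hmD.le _)
    rw [mul_comm]
    exact rpow_mul_exp_neg_le hβ hX
  refine step4.trans ?_
  -- Step 5 : (m * D) ^ (-β) ≤ (n * ω * (ξ+c)) ^ (-β) and split
  have h5 : (n:ℝ) * ω * (ξ + c) ≤ m * D := by
    rw [hmdef, hDdef]; nlinarith [mul_pos hω (by linarith : (0:ℝ) < ξ + c)]
  have h6 : (m * D) ^ (-β) ≤ ((n:ℝ) * ω * (ξ + c)) ^ (-β) :=
    Real.rpow_le_rpow_of_nonpos (by positivity) h5 (by linarith)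
  have h7 : ((n:ℝ) * ω * (ξ + c)) ^ (-β) = (n:ℝ) ^ (-β) * ω ^ (-β) * (ξ + c) ^ (-β) := by
    rw [Real.mul_rpow (by positivity) (by positivity : (0:ℝ) ≤ ξ + c),
      Real.mul_rpow (by positivity) hω.le]
  calc (β / Real.exp 1) ^ β * (m * D) ^ (-β)
      ≤ (β / Real.exp 1) ^ β * ((n:ℝ) ^ (-β) * ω ^ (-β) * (ξ + c) ^ (-β)) := by
        rw [← h7]; exact mul_le_mul_of_nonneg_left h6 (Real.rpow_nonneg (by positivity) _)
    _ = (β / Real.exp 1) ^ β * ω ^ (-β) * (n:ℝ) ^ (-β) * (ξ + c) ^ (-β) := by ring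

lemma lint_Ioi_rpow {a r : ℝ} (ha : 0 < a) (hr : r < -1) :
    ∫⁻ ξ in Ioi a, ENNReal.ofReal (ξ ^ r) = ENNReal.ofReal (-a ^ (r + 1) / (r + 1)) := by
  rw [← MeasureTheory.ofReal_integral_eq_lintegral_ofReal
      (integrableOn_Ioi_rpow_of_lt hr ha)
      ((ae_restrict_iff' measurableSet_Ioi).2 (Filter.Eventually.of_forall fun ξ hξ =>
        Real.rpow_nonneg (le_of_lt (ha.trans hξ)) r)),
    integral_Ioi_rpow_of_lt hr ha]

lemma lint_Ioc_rpow {b r : ℝ} (hb : 1 ≤ b) :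
    ∫⁻ ξ in Ioc (1:ℝ) b, ENNReal.ofReal (ξ ^ r) = ENNReal.ofReal (∫ ξ in (1:ℝ)..b, ξ ^ r) := by
  have hint : IntegrableOn (fun ξ : ℝ => ξ ^ r) (Ioc (1:ℝ) b) := by
    refine (ContinuousOn.integrableOn_Icc ?_).mono_set Ioc_subset_Icc_self
    intro x hx
    exact (Real.continuousAt_rpow_const x r
      (Or.inl (ne_of_gt (lt_of_lt_of_le zero_lt_one hx.1)))).continuousWithinAt
  rw [intervalIntegral.integral_of_le hb,
    ← MeasureTheory.ofReal_integral_eq_lintegral_ofReal hint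
      ((ae_restrict_iff' measurableSet_Ioc).2 (Filter.Eventually.of_forall fun ξ hξ =>
        Real.rpow_nonneg (le_of_lt (lt_of_lt_of_le zero_lt_one hξ.1.le)) r))]

lemma lint_const_Ioc01 {f : ℝ → ENNReal} {Cb : ENNReal} (h : ∀ ξ ∈ Ioc (0:ℝ) 1, f ξ ≤ Cb) :
    ∫⁻ ξ in Ioc (0:ℝ) 1, f ξ ≤ Cb := by
  calc ∫⁻ ξ in Ioc (0:ℝ) 1, f ξ ≤ ∫⁻ _ in Ioc (0:ℝ) 1, Cb :=
        MeasureTheory.lintegral_mono_ae ((ae_restrict_iff' measurableSet_Ioc).2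
          (Filter.Eventually.of_forall h))
    _ = Cb := by rw [MeasureTheory.setLIntegral_const, Real.volume_Ioc]; norm_num

lemma sup_hfun_le {n : ℕ} {α c ω ξ b : ℝ} (hb : ∀ s : ℝ, 0 ≤ s → hfun n α c ω ξ s ≤ b) :
    (⨆ s : Set.Ici (0:ℝ), hfun n α c ω ξ s) ≤ b := by
  haveI : Nonempty (Set.Ici (0:ℝ)) := ⟨⟨0, Set.mem_Ici.2 (le_refl 0)⟩⟩
  exact ciSup_le fun s => hb s s.2

lemma lint_tailA {α c ω q a : ℝ} (hc : 0 < c) (hω : 0 < ω) (hq : 0 < q) (hα : q < α)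
    (ha : 1 ≤ a) :
    ∫⁻ ξ in Ioi a, ENNReal.ofReal (phiq q ξ * (ξ + c + ω) ^ (-(α + 2)))
      ≤ ENNReal.ofReal (a ^ (q - α - 1) / (α + 1 - q)) := by
  have key : ∀ ξ ∈ Ioi a, phiq q ξ * (ξ + c + ω) ^ (-(α + 2)) ≤ ξ ^ (q - α - 2) := by
    intro ξ hξ
    have h1 : (1:ℝ) ≤ ξ := le_of_lt (lt_of_le_of_lt ha hξ)
    have hξ0 : 0 < ξ := lt_of_lt_of_le zero_lt_one h1
    rw [phiq_of_one_le h1]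
    have h2 : (ξ + c + ω) ^ (-(α + 2)) ≤ ξ ^ (-(α + 2)) :=
      Real.rpow_le_rpow_of_nonpos hξ0 (by linarith) (by linarith)
    calc ξ ^ q * (ξ + c + ω) ^ (-(α + 2)) ≤ ξ ^ q * ξ ^ (-(α + 2)) :=
          mul_le_mul_of_nonneg_left h2 (Real.rpow_nonneg hξ0.le q)
      _ = ξ ^ (q - α - 2) := by rw [← Real.rpow_add hξ0]; ring_nf
  calc ∫⁻ ξ in Ioi a, ENNReal.ofReal (phiq q ξ * (ξ + c + ω) ^ (-(α + 2)))
      ≤ ∫⁻ ξ in Ioi a, ENNReal.ofReal (ξ ^ (q - α - 2)) :=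
        MeasureTheory.lintegral_mono_ae ((ae_restrict_iff' measurableSet_Ioi).2
          (Filter.Eventually.of_forall fun ξ hξ => ENNReal.ofReal_le_ofReal (key ξ hξ)))
    _ = ENNReal.ofReal (-a ^ (q - α - 2 + 1) / (q - α - 2 + 1)) :=
        lint_Ioi_rpow (lt_of_lt_of_le zero_lt_one ha) (by linarith)
    _ = ENNReal.ofReal (a ^ (q - α - 1) / (α + 1 - q)) := by
        rw [show q - α - 2 + 1 = q - α - 1 by ring, show α + 1 - q = -(q - α - 1) by ring,
          div_neg, ← neg_div]

lemma Hint_le_ofBound {α c ω q : ℝ} {n : ℕ} {g : ℝ → ℝ}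
    (hg : ∀ ξ ∈ Ioi (0:ℝ), ∀ s : ℝ, 0 ≤ s → hfun n α c ω ξ s ≤ g ξ) :
    Hint α c ω q n ≤ ∫⁻ ξ in Ioi (0:ℝ), ENNReal.ofReal (phiq q ξ * g ξ) := by
  refine MeasureTheory.lintegral_mono_ae ((ae_restrict_iff' measurableSet_Ioi).2
    (Filter.Eventually.of_forall fun ξ hξ => ENNReal.ofReal_le_ofReal ?_))
  exact mul_le_mul_of_nonneg_left (sup_hfun_le (hg ξ hξ)) (phiq_nonneg q ξ)

lemma Hint_part1 {α c ω q : ℝ} (hc : 0 < c) (hω : 0 < ω) (hq : 0 < q) (hα : q < α)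
    {n : ℕ} (hn : 1 ≤ n) :
    Hint α c ω q n ≤ ENNReal.ofReal ((c + ω) ^ (-(α + 2)) + 1 / (α + 1 - q)) := by
  have hα0 : 0 < α := hq.trans hα
  have h1 : Hint α c ω q n ≤
      ∫⁻ ξ in Ioi (0:ℝ), ENNReal.ofReal (phiq q ξ * (ξ + c + ω) ^ (-(α + 2))) :=
    Hint_le_ofBound fun ξ hξ s hs => hfun_le_A hn hα0 hc hω hξ hs
  refine h1.trans ?_
  rw [← Ioc_union_Ioi_eq_Ioi (zero_le_one : (0:ℝ) ≤ 1),
    MeasureTheory.lintegral_union measurableSet_Ioi (Ioc_disjoint_Ioi le_rfl)]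
  have p1 : ∫⁻ ξ in Ioc (0:ℝ) 1, ENNReal.ofReal (phiq q ξ * (ξ + c + ω) ^ (-(α + 2)))
      ≤ ENNReal.ofReal ((c + ω) ^ (-(α + 2))) := by
    refine lint_const_Ioc01 fun ξ hξ => ENNReal.ofReal_le_ofReal ?_
    have h2 : (ξ + c + ω) ^ (-(α + 2)) ≤ (c + ω) ^ (-(α + 2)) :=
      Real.rpow_le_rpow_of_nonpos (by positivity) (by linarith [hξ.1]) (by linarith)
    calc phiq q ξ * (ξ + c + ω) ^ (-(α + 2)) ≤ 1 * ((c + ω) ^ (-(α + 2))) :=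
          mul_le_mul (phiq_le_one hξ.2) h2 (Real.rpow_nonneg (by linarith [hξ.1]) _) zero_le_one
      _ = (c + ω) ^ (-(α + 2)) := one_mul _
  have p2 := lint_tailA hc hω hq hα (le_refl (1:ℝ))
  rw [Real.one_rpow] at p2
  have hnn1 : (0:ℝ) ≤ (c + ω) ^ (-(α + 2)) := Real.rpow_nonneg (by positivity) _
  have hnn2 : (0:ℝ) ≤ 1 / (α + 1 - q) := by
    have h : (0:ℝ) < α + 1 - q := by linarith
    positivity
  calc _ ≤ ENNReal.ofReal ((c + ω) ^ (-(α + 2))) + ENNReal.ofReal (1 / (α + 1 - q)) :=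
        add_le_add p1 p2
    _ = _ := (ENNReal.ofReal_add hnn1 hnn2).symm

lemma Hint_master {α c ω q : ℝ} (hc : 0 < c) (hω : 0 < ω) (hq : 0 < q) (hα : q < α)
    {n : ℕ} (hn : 2 ≤ n) :
    Hint α c ω q n ≤
      ENNReal.ofReal (((α+2)/2 / Real.exp 1) ^ ((α+2)/2) * ω ^ (-((α+2)/2)) *
          (n : ℝ) ^ (-((α+2)/2)) * c ^ (-((α+2)/2)))
      + ENNReal.ofReal (((α+2)/2 / Real.exp 1) ^ ((α+2)/2) * ω ^ (-((α+2)/2)) *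
          (n : ℝ) ^ (-((α+2)/2)))
        * (∫⁻ ξ in Ioc (1:ℝ) (n:ℝ), ENNReal.ofReal (ξ ^ (q - (α+2)/2)))
      + ENNReal.ofReal ((n : ℝ) ^ (q - α - 1) / (α + 1 - q)) := by
  have hα0 : 0 < α := hq.trans hα
  set β := (α + 2) / 2 with hβdef
  have hβ : 0 < β := by rw [hβdef]; linarith
  set K := (β / Real.exp 1) ^ β * ω ^ (-β) with hKdef
  have hK : 0 < K :=
    mul_pos (Real.rpow_pos_of_pos (by positivity) _) (Real.rpow_pos_of_pos hω _)
  have hn1 : (1:ℝ) ≤ (n:ℝ) := by exact_mod_cast le_trans one_le_two hn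
  have hn0 : (0:ℝ) < (n:ℝ) := lt_of_lt_of_le zero_lt_one hn1
  set g : ℝ → ℝ := fun ξ =>
    if ξ ≤ (n:ℝ) then K * (n:ℝ) ^ (-β) * (ξ + c) ^ (-β) else (ξ + c + ω) ^ (-(α + 2))
    with hgdef
  have h1 : Hint α c ω q n ≤ ∫⁻ ξ in Ioi (0:ℝ), ENNReal.ofReal (phiq q ξ * g ξ) := by
    refine Hint_le_ofBound fun ξ hξ s hs => ?_
    simp only [hgdef]
    by_cases hcase : ξ ≤ (n:ℝ)
    · rw [if_pos hcase]
      refine (hfun_le_B hn hα0 hc hω hξ hs).trans ?_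
      rw [hKdef]
    · rw [if_neg hcase]
      exact hfun_le_A (le_trans one_le_two hn) hα0 hc hω hξ hs
  refine h1.trans ?_
  rw [← Ioc_union_Ioi_eq_Ioi (le_of_lt hn0),
    MeasureTheory.lintegral_union measurableSet_Ioi (Ioc_disjoint_Ioi le_rfl),
    ← Ioc_union_Ioc_eq_Ioc (zero_le_one : (0:ℝ) ≤ 1) hn1,
    MeasureTheory.lintegral_union measurableSet_Ioc (Ioc_disjoint_Ioc_of_le le_rfl)]
  have p1 : ∫⁻ ξ in Ioc (0:ℝ) 1, ENNReal.ofReal (phiq q ξ * g ξ)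
      ≤ ENNReal.ofReal (K * (n:ℝ) ^ (-β) * c ^ (-β)) := by
    refine lint_const_Ioc01 fun ξ hξ => ENNReal.ofReal_le_ofReal ?_
    have hcase : ξ ≤ (n:ℝ) := le_trans hξ.2 hn1
    have hg : g ξ = K * (n:ℝ) ^ (-β) * (ξ + c) ^ (-β) := by simp only [hgdef]; exact if_pos hcase
    rw [hg]
    have h2 : (ξ + c) ^ (-β) ≤ c ^ (-β) :=
      Real.rpow_le_rpow_of_nonpos hc (by linarith [hξ.1]) (by linarith)
    calc phiq q ξ * (K * (n:ℝ) ^ (-β) * (ξ + c) ^ (-β))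
        ≤ 1 * (K * (n:ℝ) ^ (-β) * c ^ (-β)) := by
          refine mul_le_mul (phiq_le_one hξ.2) ?_
            (mul_nonneg (mul_nonneg hK.le (Real.rpow_nonneg hn0.le _))
              (Real.rpow_nonneg (by linarith [hξ.1]) _)) zero_le_one
          exact mul_le_mul_of_nonneg_left h2 (by positivity)
      _ = K * (n:ℝ) ^ (-β) * c ^ (-β) := one_mul _
  have p2 : ∫⁻ ξ in Ioc (1:ℝ) (n:ℝ), ENNReal.ofReal (phiq q ξ * g ξ)
      ≤ ENNReal.ofReal (K * (n:ℝ) ^ (-β)) *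
        (∫⁻ ξ in Ioc (1:ℝ) (n:ℝ), ENNReal.ofReal (ξ ^ (q - β))) := by
    rw [← MeasureTheory.lintegral_const_mul' _ _ ENNReal.ofReal_ne_top]
    refine MeasureTheory.lintegral_mono_ae ((ae_restrict_iff' measurableSet_Ioc).2
      (Filter.Eventually.of_forall fun ξ hξ => ?_))
    have hξ1 : (1:ℝ) ≤ ξ := hξ.1.le
    have hξ0 : (0:ℝ) < ξ := lt_of_lt_of_le zero_lt_one hξ1
    have hg : g ξ = K * (n:ℝ) ^ (-β) * (ξ + c) ^ (-β) := by simp only [hgdef]; exact if_pos hξ.2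
    rw [hg, phiq_of_one_le hξ1, ← ENNReal.ofReal_mul (by positivity)]
    refine ENNReal.ofReal_le_ofReal ?_
    have h2 : (ξ + c) ^ (-β) ≤ ξ ^ (-β) :=
      Real.rpow_le_rpow_of_nonpos hξ0 (by linarith) (by linarith)
    calc ξ ^ q * (K * (n:ℝ) ^ (-β) * (ξ + c) ^ (-β))
        = K * (n:ℝ) ^ (-β) * (ξ ^ q * (ξ + c) ^ (-β)) := by ring
      _ ≤ K * (n:ℝ) ^ (-β) * (ξ ^ q * ξ ^ (-β)) := by
          refine mul_le_mul_of_nonneg_left ?_ (by positivity)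
          exact mul_le_mul_of_nonneg_left h2 (Real.rpow_nonneg hξ0.le q)
      _ = K * (n:ℝ) ^ (-β) * ξ ^ (q - β) := by
          rw [← Real.rpow_add hξ0, show q + -β = q - β by ring]
  have p3 : ∫⁻ ξ in Ioi (n:ℝ), ENNReal.ofReal (phiq q ξ * g ξ)
      ≤ ENNReal.ofReal ((n : ℝ) ^ (q - α - 1) / (α + 1 - q)) := by
    have heq : ∀ ξ ∈ Ioi (n:ℝ), ENNReal.ofReal (phiq q ξ * g ξ)
        = ENNReal.ofReal (phiq q ξ * (ξ + c + ω) ^ (-(α + 2))) := by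
      intro ξ hξ
      have : ¬ ξ ≤ (n:ℝ) := not_le.2 hξ
      simp only [hgdef]; rw [if_neg this]
    rw [MeasureTheory.setLIntegral_congr_fun measurableSet_Ioi
      heq]
    exact lint_tailA hc hω hq hα hn1
  exact add_le_add (add_le_add p1 p2) p3

lemma Hint_final {α c ω q : ℝ} (hc : 0 < c) (hω : 0 < ω) (hq : 0 < q) (hα : q < α)
    {n : ℕ} (hn : 2 ≤ n) {Jv R : ℝ} (hJv : 0 ≤ Jv)
    (hJ : (∫⁻ ξ in Ioc (1:ℝ) (n:ℝ), ENNReal.ofReal (ξ ^ (q - (α+2)/2)))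
      ≤ ENNReal.ofReal Jv)
    (hR : ((α+2)/2 / Real.exp 1) ^ ((α+2)/2) * ω ^ (-((α+2)/2)) * (n : ℝ) ^ (-((α+2)/2))
            * c ^ (-((α+2)/2))
          + ((α+2)/2 / Real.exp 1) ^ ((α+2)/2) * ω ^ (-((α+2)/2)) * (n : ℝ) ^ (-((α+2)/2)) * Jv
          + (n : ℝ) ^ (q - α - 1) / (α + 1 - q) ≤ R) :
    Hint α c ω q n ≤ ENNReal.ofReal R := by
  have hα0 : 0 < α := hq.trans hα
  have hn0 : (0:ℝ) < (n:ℝ) := by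
    have : (0:ℕ) < n := lt_of_lt_of_le (by norm_num) hn
    exact_mod_cast this
  set K := ((α+2)/2 / Real.exp 1) ^ ((α+2)/2) * ω ^ (-((α+2)/2)) with hKdef
  have hK : 0 < K :=
    mul_pos (Real.rpow_pos_of_pos (by positivity) _) (Real.rpow_pos_of_pos hω _)
  have hKn : 0 ≤ K * (n:ℝ) ^ (-((α+2)/2)) :=
    mul_nonneg hK.le (Real.rpow_nonneg hn0.le _)
  refine (Hint_master hc hω hq hα hn).trans ?_
  have s2 : ENNReal.ofReal (K * (n:ℝ) ^ (-((α+2)/2))) *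
        (∫⁻ ξ in Ioc (1:ℝ) (n:ℝ), ENNReal.ofReal (ξ ^ (q - (α+2)/2)))
      ≤ ENNReal.ofReal (K * (n:ℝ) ^ (-((α+2)/2)) * Jv) := by
    rw [ENNReal.ofReal_mul hKn]
    exact mul_le_mul_right hJ _
  calc _ ≤ ENNReal.ofReal (K * (n:ℝ) ^ (-((α+2)/2)) * c ^ (-((α+2)/2)))
        + ENNReal.ofReal (K * (n:ℝ) ^ (-((α+2)/2)) * Jv)
        + ENNReal.ofReal ((n : ℝ) ^ (q - α - 1) / (α + 1 - q)) :=
        add_le_add (add_le_add le_rfl s2) le_rfl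
    _ = ENNReal.ofReal (K * (n:ℝ) ^ (-((α+2)/2)) * c ^ (-((α+2)/2))
        + K * (n:ℝ) ^ (-((α+2)/2)) * Jv
        + (n : ℝ) ^ (q - α - 1) / (α + 1 - q)) := by
        rw [← ENNReal.ofReal_add (mul_nonneg hKn (Real.rpow_nonneg hc.le _)) (mul_nonneg hKn hJv),
          ← ENNReal.ofReal_add (add_nonneg (mul_nonneg hKn (Real.rpow_nonneg hc.le _))
            (mul_nonneg hKn hJv)) (div_nonneg (Real.rpow_nonneg hn0.le _) (by linarith))]
    _ ≤ ENNReal.ofReal R := ENNReal.ofReal_le_ofReal hR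


/-- Lemma 3.7 (the `h` part): for `c, ω > 0` and `α > q > 0`, the quantities `H(n)` are
uniformly bounded in `n`, and as `n → ∞`:
`H(n) = O(n^{q-α-1})` if `q < α < 2q`, `H(n) = O(n^{-(q+1)} log n)` if `α = 2q`, and
`H(n) = O(n^{-(α/2+1)})` if `α > 2q`. -/
theorem Hint_bounds
    (α c ω q : ℝ) (hc : 0 < c) (hω : 0 < ω) (hq : 0 < q) (hα : q < α) :
    (∃ C : ℝ, ∀ n : ℕ, 1 ≤ n → Hint α c ω q n ≤ ENNReal.ofReal C) ∧
    (α < 2 * q →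
      ∃ M : ℝ, 0 < M ∧ ∃ N : ℕ, ∀ n : ℕ, N ≤ n →
        Hint α c ω q n ≤ ENNReal.ofReal (M * (n : ℝ) ^ (q - α - 1))) ∧
    (α = 2 * q →
      ∃ M : ℝ, 0 < M ∧ ∃ N : ℕ, ∀ n : ℕ, N ≤ n →
        Hint α c ω q n ≤ ENNReal.ofReal (M * Real.log (n : ℝ) * (n : ℝ) ^ (-(q + 1)))) ∧
    (2 * q < α →
      ∃ M : ℝ, 0 < M ∧ ∃ N : ℕ, ∀ n : ℕ, N ≤ n →
        Hint α c ω q n ≤ ENNReal.ofReal (M * (n : ℝ) ^ (-(α / 2 + 1)))) := by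
  have hα0 : 0 < α := hq.trans hα
  have hαq : 0 < α + 1 - q := by linarith
  set K := ((α+2)/2 / Real.exp 1) ^ ((α+2)/2) * ω ^ (-((α+2)/2)) with hKdef
  have hK : 0 < K :=
    mul_pos (Real.rpow_pos_of_pos (by positivity) _) (Real.rpow_pos_of_pos hω _)
  have hcβ : 0 < c ^ (-((α+2)/2)) := Real.rpow_pos_of_pos hc _
  refine ⟨⟨(c + ω) ^ (-(α + 2)) + 1 / (α + 1 - q),
    fun n hn => Hint_part1 hc hω hq hα hn⟩, ?_, ?_, ?_⟩
  · -- case α < 2q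
    intro hlt
    have hr1 : 0 < q - (α+2)/2 + 1 := by linarith
    refine ⟨K * c ^ (-((α+2)/2)) + K / (q - (α+2)/2 + 1) + 1 / (α + 1 - q),
      add_pos (add_pos (mul_pos hK hcβ) (div_pos hK hr1)) (div_pos one_pos hαq),
      2, fun n hn => ?_⟩
    have hn1 : (1:ℝ) ≤ (n:ℝ) := by exact_mod_cast le_trans one_le_two hn
    have hn0 : (0:ℝ) < (n:ℝ) := lt_of_lt_of_le zero_lt_one hn1
    refine Hint_final hc hω hq hα hn
      (Jv := (n:ℝ) ^ (q - (α+2)/2 + 1) / (q - (α+2)/2 + 1))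
      (div_nonneg (Real.rpow_nonneg hn0.le _) hr1.le) ?_ ?_
    · rw [lint_Ioc_rpow hn1, integral_rpow (Or.inl (by linarith : (-1:ℝ) < q - (α+2)/2))]
      refine ENNReal.ofReal_le_ofReal ?_
      rw [Real.one_rpow]
      have hnn : (0:ℝ) ≤ (n:ℝ) ^ (q - (α+2)/2 + 1) := Real.rpow_nonneg hn0.le _
      exact div_le_div_of_nonneg_right (by linarith) hr1.le
    · rw [← hKdef]
      have e1 : (n:ℝ) ^ (-((α+2)/2)) ≤ (n:ℝ) ^ (q - α - 1) :=
        Real.rpow_le_rpow_of_exponent_le hn1 (by linarith)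
      have e2 : (n:ℝ) ^ (-((α+2)/2)) * (n:ℝ) ^ (q - (α+2)/2 + 1) = (n:ℝ) ^ (q - α - 1) := by
        rw [← Real.rpow_add hn0]; congr 1; ring
      have t1 : K * (n:ℝ) ^ (-((α+2)/2)) * c ^ (-((α+2)/2))
          ≤ K * c ^ (-((α+2)/2)) * (n:ℝ) ^ (q - α - 1) := by
        calc K * (n:ℝ) ^ (-((α+2)/2)) * c ^ (-((α+2)/2))
            = K * c ^ (-((α+2)/2)) * (n:ℝ) ^ (-((α+2)/2)) := by ring
          _ ≤ K * c ^ (-((α+2)/2)) * (n:ℝ) ^ (q - α - 1) :=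
            mul_le_mul_of_nonneg_left e1 (mul_nonneg hK.le hcβ.le)
      have t2 : K * (n:ℝ) ^ (-((α+2)/2)) * ((n:ℝ) ^ (q - (α+2)/2 + 1) / (q - (α+2)/2 + 1))
          = K / (q - (α+2)/2 + 1) * (n:ℝ) ^ (q - α - 1) := by
        rw [← e2]; ring
      calc _ ≤ K * c ^ (-((α+2)/2)) * (n:ℝ) ^ (q - α - 1)
            + K * (n:ℝ) ^ (-((α+2)/2)) * ((n:ℝ) ^ (q - (α+2)/2 + 1) / (q - (α+2)/2 + 1))
            + (n:ℝ) ^ (q - α - 1) / (α + 1 - q) := by linarith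
        _ = (K * c ^ (-((α+2)/2)) + K / (q - (α+2)/2 + 1) + 1 / (α + 1 - q))
            * (n:ℝ) ^ (q - α - 1) := by rw [t2]; ring
  · -- case α = 2q
    intro heq
    refine ⟨K * c ^ (-((α+2)/2)) + K + 1 / (α + 1 - q),
      add_pos (add_pos (mul_pos hK hcβ) hK) (div_pos one_pos hαq),
      3, fun n hn => ?_⟩
    have hn2 : 2 ≤ n := le_trans (by norm_num) hn
    have hn1 : (1:ℝ) ≤ (n:ℝ) := by exact_mod_cast le_trans one_le_two hn2
    have hn0 : (0:ℝ) < (n:ℝ) := lt_of_lt_of_le zero_lt_one hn1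
    have hn3 : (3:ℝ) ≤ (n:ℝ) := by exact_mod_cast hn
    have hlog : 1 ≤ Real.log (n:ℝ) := by
      rw [Real.le_log_iff_exp_le hn0]
      exact le_trans (le_of_lt (lt_trans Real.exp_one_lt_d9 (by norm_num))) hn3
    have hlognn : 0 < Real.log (n:ℝ) := lt_of_lt_of_le one_pos hlog
    refine Hint_final hc hω hq hα hn2 (Jv := Real.log (n:ℝ)) hlognn.le ?_ ?_
    · rw [lint_Ioc_rpow hn1]
      refine ENNReal.ofReal_le_ofReal (le_of_eq ?_)
      rw [show q - (α+2)/2 = -1 by rw [heq]; ring]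
      simp only [Real.rpow_neg_one]
      rw [integral_inv_of_pos zero_lt_one hn0, div_one]
    · rw [← hKdef]
      rw [show -((α+2)/2) = -(q+1) by rw [heq]; ring,
        show q - α - 1 = -(q+1) by rw [heq]; ring]
      have hnp : (0:ℝ) < (n:ℝ) ^ (-(q+1)) := Real.rpow_pos_of_pos hn0 _
      have b1 : K * (n:ℝ) ^ (-(q+1)) * c ^ (-(q+1))
          ≤ K * c ^ (-(q+1)) * (Real.log (n:ℝ) * (n:ℝ) ^ (-(q+1))) := by
        calc K * (n:ℝ) ^ (-(q+1)) * c ^ (-(q+1))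
            = K * c ^ (-(q+1)) * (n:ℝ) ^ (-(q+1)) := by ring
          _ ≤ K * c ^ (-(q+1)) * (Real.log (n:ℝ) * (n:ℝ) ^ (-(q+1))) :=
            mul_le_mul_of_nonneg_left (le_mul_of_one_le_left hnp.le hlog)
              (mul_nonneg hK.le (Real.rpow_nonneg hc.le _))
      have b3 : (n:ℝ) ^ (-(q+1)) / (α + 1 - q)
          ≤ 1 / (α + 1 - q) * (Real.log (n:ℝ) * (n:ℝ) ^ (-(q+1))) := by
        calc (n:ℝ) ^ (-(q+1)) / (α + 1 - q)
            = 1 / (α + 1 - q) * (n:ℝ) ^ (-(q+1)) := by ring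
          _ ≤ 1 / (α + 1 - q) * (Real.log (n:ℝ) * (n:ℝ) ^ (-(q+1))) :=
            mul_le_mul_of_nonneg_left (le_mul_of_one_le_left hnp.le hlog)
              (by positivity)
      calc _ ≤ K * c ^ (-(q+1)) * (Real.log (n:ℝ) * (n:ℝ) ^ (-(q+1)))
            + K * (n:ℝ) ^ (-(q+1)) * Real.log (n:ℝ)
            + 1 / (α + 1 - q) * (Real.log (n:ℝ) * (n:ℝ) ^ (-(q+1))) := by linarith
        _ = (K * c ^ (-(q+1)) + K + 1 / (α + 1 - q)) * Real.log (n:ℝ)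
            * (n:ℝ) ^ (-(q+1)) := by ring
  · -- case 2q < α
    intro hgt
    have hr1 : 0 < (α+2)/2 - q - 1 := by linarith
    refine ⟨K * c ^ (-((α+2)/2)) + K * (1 / ((α+2)/2 - q - 1)) + 1 / (α + 1 - q),
      add_pos (add_pos (mul_pos hK hcβ) (mul_pos hK (div_pos one_pos hr1)))
        (div_pos one_pos hαq),
      2, fun n hn => ?_⟩
    have hn1 : (1:ℝ) ≤ (n:ℝ) := by exact_mod_cast le_trans one_le_two hn
    have hn0 : (0:ℝ) < (n:ℝ) := lt_of_lt_of_le zero_lt_one hn1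
    refine Hint_final hc hω hq hα hn (Jv := 1 / ((α+2)/2 - q - 1))
      (div_nonneg zero_le_one hr1.le) ?_ ?_
    · calc (∫⁻ ξ in Ioc (1:ℝ) (n:ℝ), ENNReal.ofReal (ξ ^ (q - (α+2)/2)))
          ≤ ∫⁻ ξ in Ioi (1:ℝ), ENNReal.ofReal (ξ ^ (q - (α+2)/2)) :=
            MeasureTheory.lintegral_mono_set Ioc_subset_Ioi_self
        _ = ENNReal.ofReal (-(1:ℝ) ^ (q - (α+2)/2 + 1) / (q - (α+2)/2 + 1)) :=
            lint_Ioi_rpow zero_lt_one (by linarith)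
        _ = ENNReal.ofReal (1 / ((α+2)/2 - q - 1)) := by
            rw [Real.one_rpow]
            congr 1
            rw [show q - (α+2)/2 + 1 = -((α+2)/2 - q - 1) by ring, div_neg, neg_div, neg_neg]
    · rw [← hKdef]
      rw [show -(α/2 + 1) = -((α+2)/2) by ring]
      have e1 : (n:ℝ) ^ (q - α - 1) ≤ (n:ℝ) ^ (-((α+2)/2)) :=
        Real.rpow_le_rpow_of_exponent_le hn1 (by linarith)
      have t3 : (n:ℝ) ^ (q - α - 1) / (α + 1 - q) ≤ (n:ℝ) ^ (-((α+2)/2)) / (α + 1 - q) :=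
        div_le_div_of_nonneg_right e1 hαq.le
      calc _ ≤ K * (n:ℝ) ^ (-((α+2)/2)) * c ^ (-((α+2)/2))
            + K * (n:ℝ) ^ (-((α+2)/2)) * (1 / ((α+2)/2 - q - 1))
            + (n:ℝ) ^ (-((α+2)/2)) / (α + 1 - q) := by linarith
        _ = (K * c ^ (-((α+2)/2)) + K * (1 / ((α+2)/2 - q - 1)) + 1 / (α + 1 - q))
            * (n:ℝ) ^ (-((α+2)/2)) := by ring


end
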